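/- Let u(s,t) : h_t → h_s be the propagator of the free half-line transport system ∂_s ψ + L ∂_x ψ = 0 on x > z(s) with boundary condition ψ₁(s,z(s)) = λ(s) ψ₂(s,z(s)), where h_t = L²((z(t),∞),ℂ²) and λ(t) = ((1+ż(t))/(1−ż(t)))^{1/2}. Then u(s,t) is unitary from h_t to h_s; equivalently, the L² norm ∫_{z(s)}^∞ ‖ψ(s,x)‖² dx is conserved along solutions. -/

import Mathlib

open MeasureTheory

noncomputable section TransportAux

/-- energy density -/
private def fE (ψ : ℝ × ℝ → ℂ × ℂ) (p : ℝ × ℝ) : ℝ := ‖(ψ p).1‖ ^ 2 + ‖(ψ p).2‖ ^ 2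

/-- flux density -/
private def gE (ψ : ℝ × ℝ → ℂ × ℂ) (p : ℝ × ℝ) : ℝ := ‖(ψ p).2‖ ^ 2 - ‖(ψ p).1‖ ^ 2

/-- partial derivative of `ψ` in the time direction -/
private def d1 (ψ : ℝ × ℝ → ℂ × ℂ) (p : ℝ × ℝ) : ℂ × ℂ := fderiv ℝ ψ p (1, 0)

/-- partial derivative of `ψ` in the space direction -/
private def d2 (ψ : ℝ × ℝ → ℂ × ℂ) (p : ℝ × ℝ) : ℂ × ℂ := fderiv ℝ ψ p (0, 1)

/-- time derivative of the energy density -/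
private def fs (ψ : ℝ × ℝ → ℂ × ℂ) (p : ℝ × ℝ) : ℝ :=
  2 * ((ψ p).1.re * (d1 ψ p).1.re + (ψ p).1.im * (d1 ψ p).1.im
    + (ψ p).2.re * (d1 ψ p).2.re + (ψ p).2.im * (d1 ψ p).2.im)

/-- space derivative of the flux density -/
private def gx (ψ : ℝ × ℝ → ℂ × ℂ) (p : ℝ × ℝ) : ℝ :=
  2 * ((ψ p).2.re * (d2 ψ p).2.re + (ψ p).2.im * (d2 ψ p).2.im
    - (ψ p).1.re * (d2 ψ p).1.re - (ψ p).1.im * (d2 ψ p).1.im)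

private lemma norm_sq_c (w : ℂ) : ‖w‖ ^ 2 = w.re ^ 2 + w.im ^ 2 := by
  rw [Complex.sq_norm, Complex.normSq_apply]; ring

variable {ψ : ℝ × ℝ → ℂ × ℂ}

private lemma HasDerivAt.cfst {F : ℝ → ℂ × ℂ} {F' : ℂ × ℂ} {t : ℝ} (h : HasDerivAt F F' t) :
    HasDerivAt (fun u => (F u).1) F'.1 t :=
  (ContinuousLinearMap.fst ℝ ℂ ℂ).hasFDerivAt.comp_hasDerivAt t h

private lemma HasDerivAt.csnd {F : ℝ → ℂ × ℂ} {F' : ℂ × ℂ} {t : ℝ} (h : HasDerivAt F F' t) :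
    HasDerivAt (fun u => (F u).2) F'.2 t :=
  (ContinuousLinearMap.snd ℝ ℂ ℂ).hasFDerivAt.comp_hasDerivAt t h

private lemma HasDerivAt.cre {F : ℝ → ℂ} {F' : ℂ} {t : ℝ} (h : HasDerivAt F F' t) :
    HasDerivAt (fun u => (F u).re) F'.re t :=
  Complex.reCLM.hasFDerivAt.comp_hasDerivAt t h

private lemma HasDerivAt.cim {F : ℝ → ℂ} {F' : ℂ} {t : ℝ} (h : HasDerivAt F F' t) :
    HasDerivAt (fun u => (F u).im) F'.im t :=
  Complex.imCLM.hasFDerivAt.comp_hasDerivAt t h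

private lemma hasDerivAt_param1 (hreg : ContDiff ℝ 1 ψ) (s x : ℝ) :
    HasDerivAt (fun σ => ψ (σ, x)) (d1 ψ (s, x)) s := by
  have h1 : HasDerivAt (fun σ : ℝ => (σ, x)) ((1 : ℝ), (0 : ℝ)) s :=
    (hasDerivAt_id s).prodMk (hasDerivAt_const s x)
  exact (hreg.differentiable one_ne_zero (s, x)).hasFDerivAt.comp_hasDerivAt s h1

private lemma hasDerivAt_param2 (hreg : ContDiff ℝ 1 ψ) (s x : ℝ) :
    HasDerivAt (fun y => ψ (s, y)) (d2 ψ (s, x)) x := by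
  have h1 : HasDerivAt (fun y : ℝ => (s, y)) ((0 : ℝ), (1 : ℝ)) x :=
    (hasDerivAt_const x s).prodMk (hasDerivAt_id x)
  exact (hreg.differentiable one_ne_zero (s, x)).hasFDerivAt.comp_hasDerivAt x h1

private lemma hasDerivAt_fE1 (hreg : ContDiff ℝ 1 ψ) (s x : ℝ) :
    HasDerivAt (fun σ => fE ψ (σ, x)) (fs ψ (s, x)) s := by
  have h := hasDerivAt_param1 hreg s x
  have H := (((h.cfst.cre.pow 2).add (h.cfst.cim.pow 2)).add
    ((h.csnd.cre.pow 2).add (h.csnd.cim.pow 2)))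
  have hfun : (fun σ => fE ψ (σ, x)) =
      (fun σ => ((ψ (σ, x)).1.re ^ 2 + (ψ (σ, x)).1.im ^ 2)
        + ((ψ (σ, x)).2.re ^ 2 + (ψ (σ, x)).2.im ^ 2)) := by
    funext σ; simp only [fE, norm_sq_c]
  rw [hfun]
  refine H.congr_deriv ?_
  simp [fs]; ring

private lemma hasDerivAt_gE2 (hreg : ContDiff ℝ 1 ψ) (s x : ℝ) :
    HasDerivAt (fun y => gE ψ (s, y)) (gx ψ (s, x)) x := by
  have h := hasDerivAt_param2 hreg s x
  have H := (((h.csnd.cre.pow 2).add (h.csnd.cim.pow 2)).sub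
    ((h.cfst.cre.pow 2).add (h.cfst.cim.pow 2)))
  have hfun : (fun y => gE ψ (s, y)) =
      (fun y => ((ψ (s, y)).2.re ^ 2 + (ψ (s, y)).2.im ^ 2)
        - ((ψ (s, y)).1.re ^ 2 + (ψ (s, y)).1.im ^ 2)) := by
    funext y; simp only [gE, norm_sq_c]
  rw [hfun]
  refine H.congr_deriv ?_
  simp [gx]; ring

private lemma cont_fE (hreg : ContDiff ℝ 1 ψ) : Continuous (fE ψ) := by
  have h := hreg.continuous
  unfold fE
  fun_prop

private lemma cont_gE (hreg : ContDiff ℝ 1 ψ) : Continuous (gE ψ) := by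
  have h := hreg.continuous
  unfold gE
  fun_prop

private lemma cont_d1 (hreg : ContDiff ℝ 1 ψ) : Continuous (d1 ψ) :=
  (hreg.continuous_fderiv one_ne_zero).clm_apply continuous_const

private lemma cont_d2 (hreg : ContDiff ℝ 1 ψ) : Continuous (d2 ψ) :=
  (hreg.continuous_fderiv one_ne_zero).clm_apply continuous_const

private lemma cont_fs (hreg : ContDiff ℝ 1 ψ) : Continuous (fs ψ) := by
  have h1 := hreg.continuous
  have h2 := cont_d1 hreg
  unfold fs
  fun_prop

private lemma cont_gx (hreg : ContDiff ℝ 1 ψ) : Continuous (gx ψ) := by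
  have h1 := hreg.continuous
  have h2 := cont_d2 hreg
  unfold gx
  fun_prop

private lemma fs_eq_gx (hreg : ContDiff ℝ 1 ψ) {s x : ℝ}
    (h1 : deriv (fun σ => (ψ (σ, x)).1) s + deriv (fun y => (ψ (s, y)).1) x = 0)
    (h2 : deriv (fun σ => (ψ (σ, x)).2) s - deriv (fun y => (ψ (s, y)).2) x = 0) :
    fs ψ (s, x) = gx ψ (s, x) := by
  rw [(hasDerivAt_param1 hreg s x).cfst.deriv, (hasDerivAt_param2 hreg s x).cfst.deriv] at h1
  rw [(hasDerivAt_param1 hreg s x).csnd.deriv, (hasDerivAt_param2 hreg s x).csnd.deriv] at h2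
  have e1 : (d1 ψ (s, x)).1 = -(d2 ψ (s, x)).1 := eq_neg_of_add_eq_zero_left h1
  have e2 : (d1 ψ (s, x)).2 = (d2 ψ (s, x)).2 := sub_eq_zero.mp h2
  simp only [fs, gx, e1, e2, Complex.neg_re, Complex.neg_im]
  ring

end TransportAux

/-- norm conservation (unitarity of the propagator) for the
free half-line transport system `∂ₛψ + L ∂ₓψ = 0` on `x > z(s)` with the
reflecting boundary condition `ψ₁(s, z(s)) = λ(s) ψ₂(s, z(s))`, where
`λ(s) = ((1+ż(s))/(1−ż(s)))^{1/2}`: along any classical solution the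
`L²`-norm `∫_{z(s)}^∞ ‖ψ(s,x)‖² dx` is conserved. -/
theorem transport_norm_conservation
    (z z' : ℝ → ℝ)
    (hz : ∀ t : ℝ, HasDerivAt z (z' t) t)
    (hz'bound : ∀ t : ℝ, -1 ≤ z' t ∧ z' t ≤ 0)
    (ψ : ℝ × ℝ → ℂ × ℂ)
    (hreg : ContDiff ℝ 1 ψ)
    (heq1 : ∀ s x : ℝ, z s < x →
      deriv (fun σ => (ψ (σ, x)).1) s + deriv (fun y => (ψ (s, y)).1) x = 0)
    (heq2 : ∀ s x : ℝ, z s < x →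
      deriv (fun σ => (ψ (σ, x)).2) s - deriv (fun y => (ψ (s, y)).2) x = 0)
    (hbc : ∀ s : ℝ,
      (ψ (s, z s)).1 =
        (Real.sqrt ((1 + z' s) / (1 - z' s)) : ℂ) * (ψ (s, z s)).2)
    (hsupp : ∃ R : ℝ, ∀ s x : ℝ, R + |s| ≤ x → ψ (s, x) = 0) :
    ∀ s t : ℝ,
      (∫ x in Set.Ioi (z s), (‖(ψ (s, x)).1‖ ^ 2 + ‖(ψ (s, x)).2‖ ^ 2)) =
      (∫ x in Set.Ioi (z t), (‖(ψ (t, x)).1‖ ^ 2 + ‖(ψ (t, x)).2‖ ^ 2)) := by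
  obtain ⟨R, hR⟩ := hsupp
  have hfc : Continuous (fE ψ) := cont_fE hreg
  have hfsc : Continuous (fs ψ) := cont_fs hreg
  have hgxc : Continuous (gx ψ) := cont_gx hreg
  have hfcs : ∀ s : ℝ, Continuous (fun x => fE ψ (s, x)) :=
    fun s => hfc.comp (Continuous.prodMk_right s)
  have hfint : ∀ s a b : ℝ, IntervalIntegrable (fun x => fE ψ (s, x)) volume a b :=
    fun s a b => (hfcs s).intervalIntegrable a b
  -- z is 1-Lipschitz
  have hzlip : ∀ s t : ℝ, |z s - z t| ≤ |s - t| := by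
    intro s t
    have := Convex.norm_image_sub_le_of_norm_hasDerivWithin_le (f := z) (f' := z')
      (s := (Set.univ : Set ℝ)) (C := 1)
      (fun u _ => (hz u).hasDerivWithinAt)
      (fun u _ => by
        rw [Real.norm_eq_abs]
        rcases hz'bound u with ⟨h1, h2⟩
        rw [abs_le]; constructor <;> linarith)
      convex_univ (Set.mem_univ t) (Set.mem_univ s)
    simpa [Real.norm_eq_abs] using this
  -- main step: the energy has derivative 0 everywhere
  have key : ∀ s₀ : ℝ, HasDerivAt (fun s => ∫ x in Set.Ioi (z s), fE ψ (s, x)) 0 s₀ := by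
    intro s₀
    set c := z s₀ with hc
    set M := max (R + |s₀| + 2) (c + 2) with hM
    have hcM : c < M := lt_of_lt_of_le (by linarith) (le_max_right _ _)
    have hMR : R + |s₀| + 2 ≤ M := le_max_left _ _
    have hsupp' : ∀ s x : ℝ, |s - s₀| ≤ 1 → M ≤ x → ψ (s, x) = 0 := by
      intro s x hs hx
      apply hR
      have h1 : |s| ≤ |s₀| + 1 := by
        calc |s| = |s₀ + (s - s₀)| := by ring_nf
        _ ≤ |s₀| + |s - s₀| := abs_add_le _ _
        _ ≤ |s₀| + 1 := by linarith
      linarith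
    have hfE0 : ∀ s x : ℝ, |s - s₀| ≤ 1 → M ≤ x → fE ψ (s, x) = 0 := by
      intro s x hs hx
      simp [fE, hsupp' s x hs hx]
    have hzM : ∀ s : ℝ, |s - s₀| ≤ 1 → z s ≤ M := by
      intro s hs
      have h1 := hzlip s s₀
      have h2 : c + 2 ≤ M := le_max_right _ _
      have : z s - c ≤ 1 := le_trans (le_abs_self _) (le_trans h1 hs)
      linarith
    -- E agrees with a fixed-right-endpoint interval integral near s₀
    have hEG : ∀ s : ℝ, |s - s₀| ≤ 1 →
        (∫ x in Set.Ioi (z s), fE ψ (s, x)) = ∫ x in (z s)..M, fE ψ (s, x) := by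
      intro s hs
      rw [intervalIntegral.integral_of_le (hzM s hs)]
      have hun : Set.Ioc (z s) M ∪ Set.Ioi M = Set.Ioi (z s) :=
        Set.Ioc_union_Ioi_eq_Ioi (hzM s hs)
      have hint1 : IntegrableOn (fun x => fE ψ (s, x)) (Set.Ioc (z s) M) volume :=
        (hfcs s).integrableOn_Ioc
      have hint2 : IntegrableOn (fun x => fE ψ (s, x)) (Set.Ioi M) volume := by
        apply (integrableOn_zero (s := Set.Ioi M)).congr_fun _ measurableSet_Ioi
        intro x hx
        exact (hfE0 s x hs (le_of_lt hx)).symm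
      rw [← hun, setIntegral_union (Set.Ioc_disjoint_Ioi le_rfl) measurableSet_Ioi hint1 hint2]
      have : ∫ x in Set.Ioi M, fE ψ (s, x) = 0 := by
        rw [setIntegral_congr_fun measurableSet_Ioi
          (fun x hx => hfE0 s x hs (le_of_lt hx))]
        simp
      rw [this, add_zero]
    -- FTC part at the moving endpoint (with frozen parameter)
    have hB1 : HasDerivAt (fun s => ∫ x in (z s)..c, fE ψ (s₀, x)) (-fE ψ (s₀, c) * z' s₀) s₀ := by
      have hΦ : HasDerivAt (fun a => ∫ x in a..c, fE ψ (s₀, x)) (-fE ψ (s₀, c)) c :=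
        intervalIntegral.integral_hasDerivAt_left (hfint s₀ c c)
          ((hfcs s₀).stronglyMeasurableAtFilter _ _) (hfcs s₀).continuousAt
      have := hΦ.comp s₀ (hz s₀)
      simpa [Function.comp_def] using this
    -- remainder term has derivative zero
    obtain ⟨K, hK⟩ := (((isCompact_Icc (a := s₀ - 1) (b := s₀ + 1)).prod
        (isCompact_Icc (a := c - 1) (b := c + 1)))).exists_bound_of_continuousOn
        hfsc.continuousOn
    have hK0 : 0 ≤ K := le_trans (norm_nonneg _)
      (hK (s₀, c) ⟨Set.mem_Icc.mpr ⟨by linarith, by linarith⟩,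
        Set.mem_Icc.mpr ⟨by linarith, by linarith⟩⟩)
    have hB2 : HasDerivAt
        (fun s => (∫ x in (z s)..c, fE ψ (s, x)) - ∫ x in (z s)..c, fE ψ (s₀, x)) 0 s₀ := by
      rw [hasDerivAt_iff_isLittleO]
      simp only [intervalIntegral.integral_same, smul_zero, sub_zero, sub_self]
      rw [Asymptotics.isLittleO_iff]
      intro ε hε
      have hδ : (0:ℝ) < min 1 (ε / (K + 1)) := by positivity
      filter_upwards [Metric.ball_mem_nhds s₀ hδ] with s hs
      rw [Metric.mem_ball, Real.dist_eq, lt_min_iff] at hs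
      obtain ⟨hs1, hs2⟩ := hs
      have hzs : |z s - c| ≤ |s - s₀| := hzlip s s₀
      have hptwise : ∀ x ∈ Set.uIoc (z s) c,
          ‖fE ψ (s, x) - fE ψ (s₀, x)‖ ≤ (K + 1) * |s - s₀| := by
        intro x hx
        have hxIcc : x ∈ Set.Icc (c - 1) (c + 1) := by
          have h1 : x ∈ Set.uIcc (z s) c := Set.uIoc_subset_uIcc hx
          have h2 : z s ∈ Set.Icc (c - 1) (c + 1) := by
            have h3 := (abs_le.mp hzs).1
            have h4 := (abs_le.mp hzs).2
            exact Set.mem_Icc.mpr ⟨by linarith [hs1.le], by linarith [hs1.le]⟩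
          exact Set.uIcc_subset_Icc h2 (Set.mem_Icc.mpr ⟨by linarith, by linarith⟩) h1
        have := Convex.norm_image_sub_le_of_norm_hasDerivWithin_le
          (f := fun t => fE ψ (t, x)) (f' := fun t => fs ψ (t, x))
          (s := Set.Icc (s₀ - 1) (s₀ + 1)) (C := K + 1) (x := s₀) (y := s)
          (fun t _ => (hasDerivAt_fE1 hreg t x).hasDerivWithinAt)
          (fun t ht => by
            have := hK (t, x) ⟨ht, hxIcc⟩
            rw [Real.norm_eq_abs] at *
            linarith)
          (convex_Icc _ _)
          (Set.mem_Icc.mpr ⟨by linarith, by linarith⟩)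
          (Set.mem_Icc.mpr ⟨by have := (abs_lt.mp hs1).1; linarith,
            by have := (abs_lt.mp hs1).2; linarith⟩)
        simpa [Real.norm_eq_abs] using this
      have hsub : IntervalIntegrable (fun x => fE ψ (s, x) - fE ψ (s₀, x)) volume (z s) c :=
        (hfint s (z s) c).sub (hfint s₀ (z s) c)
      calc ‖(∫ x in (z s)..c, fE ψ (s, x)) - ∫ x in (z s)..c, fE ψ (s₀, x)‖
          = ‖∫ x in (z s)..c, (fE ψ (s, x) - fE ψ (s₀, x))‖ := by
            rw [intervalIntegral.integral_sub (hfint s (z s) c) (hfint s₀ (z s) c)]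
        _ ≤ (K + 1) * |s - s₀| * |c - z s| :=
            intervalIntegral.norm_integral_le_of_norm_le_const hptwise
        _ ≤ (K + 1) * |s - s₀| * |s - s₀| := by
            have h1 : |c - z s| ≤ |s - s₀| := by rw [abs_sub_comm]; exact hzs
            have h2 : 0 ≤ (K + 1) * |s - s₀| := by positivity
            exact mul_le_mul_of_nonneg_left h1 h2
        _ ≤ ε * ‖s - s₀‖ := by
            rw [Real.norm_eq_abs]
            have h3 : (K + 1) * |s - s₀| ≤ ε := by
              rw [div_eq_mul_inv] at hs2
              have : |s - s₀| < ε / (K + 1) := hs2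
              have hK1 : (0:ℝ) < K + 1 := by linarith
              calc (K + 1) * |s - s₀| ≤ (K + 1) * (ε / (K + 1)) := by
                    exact mul_le_mul_of_nonneg_left this.le (by positivity)
                _ = ε := by field_simp
            exact mul_le_mul_of_nonneg_right h3 (abs_nonneg _)
    -- parameter differentiation with fixed endpoints
    obtain ⟨K', hK'⟩ := (((isCompact_Icc (a := s₀ - 1) (b := s₀ + 1)).prod
        (isCompact_uIcc (a := c) (b := M)))).exists_bound_of_continuousOn
        hfsc.continuousOn
    have hA : HasDerivAt (fun s => ∫ x in c..M, fE ψ (s, x))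
        (∫ x in c..M, fs ψ (s₀, x)) s₀ := by
      refine (intervalIntegral.hasDerivAt_integral_of_dominated_loc_of_deriv_le
        (F := fun t x => fE ψ (t, x)) (F' := fun t x => fs ψ (t, x))
        (bound := fun _ => K') (Metric.ball_mem_nhds s₀ one_pos) ?_ ?_ ?_ ?_ ?_ ?_).2
      · exact Filter.Eventually.of_forall fun t => ((hfcs t).aestronglyMeasurable)
      · exact hfint s₀ c M
      · exact ((hfsc.comp (Continuous.prodMk_right s₀)).aestronglyMeasurable)
      · refine Filter.Eventually.of_forall fun x hx t ht => ?_
        refine hK' (t, x) ⟨?_, Set.uIoc_subset_uIcc hx⟩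
        rw [Metric.mem_ball, Real.dist_eq] at ht
        rw [Set.mem_Icc]
        rw [abs_lt] at ht
        constructor <;> linarith [ht.1, ht.2]
      · exact intervalIntegrable_const
      · exact Filter.Eventually.of_forall fun x _ t _ => hasDerivAt_fE1 hreg t x
    -- identify the parameter derivative integral via the PDE and FTC
    have hAval : (∫ x in c..M, fs ψ (s₀, x)) = gE ψ (s₀, M) - gE ψ (s₀, c) := by
      have hcongr : ∫ x in c..M, fs ψ (s₀, x) = ∫ x in c..M, gx ψ (s₀, x) := by
        apply intervalIntegral.integral_congr_ae
        refine MeasureTheory.ae_of_all _ fun x hx => ?_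
        rw [Set.uIoc_of_le hcM.le] at hx
        exact fs_eq_gx hreg (heq1 s₀ x hx.1) (heq2 s₀ x hx.1)
      rw [hcongr]
      exact intervalIntegral.integral_eq_sub_of_hasDerivAt
        (fun x _ => hasDerivAt_gE2 hreg s₀ x)
        ((hgxc.comp (Continuous.prodMk_right s₀)).intervalIntegrable c M)
    -- assemble the derivative of the interval-integral representation
    have hG : HasDerivAt (fun s => ∫ x in (z s)..M, fE ψ (s, x))
        (-fE ψ (s₀, c) * z' s₀ + 0 + (gE ψ (s₀, M) - gE ψ (s₀, c))) s₀ := by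
      have hfun : (fun s => ∫ x in (z s)..M, fE ψ (s, x)) =
          (fun s => (∫ x in (z s)..c, fE ψ (s₀, x))
            + ((∫ x in (z s)..c, fE ψ (s, x)) - ∫ x in (z s)..c, fE ψ (s₀, x))
            + ∫ x in c..M, fE ψ (s, x)) := by
        funext s
        rw [← intervalIntegral.integral_add_adjacent_intervals (hfint s (z s) c) (hfint s c M)]
        ring
      rw [hfun, ← hAval]
      exact (hB1.add hB2).add hA
    -- boundary algebra: the derivative vanishes
    have hgM : gE ψ (s₀, M) = 0 := by
      have h0 : ψ (s₀, M) = 0 := hR s₀ M (by linarith)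
      simp [gE, h0]
    have hval : -fE ψ (s₀, c) * z' s₀ + 0 + (gE ψ (s₀, M) - gE ψ (s₀, c)) = 0 := by
      have h1 : (0:ℝ) ≤ 1 + z' s₀ := by linarith [(hz'bound s₀).1]
      have h2 : (0:ℝ) < 1 - z' s₀ := by linarith [(hz'bound s₀).2]
      have hb := hbc s₀
      rw [← hc] at hb
      have hlam : ‖(ψ (s₀, c)).1‖ ^ 2 =
          ((1 + z' s₀) / (1 - z' s₀)) * ‖(ψ (s₀, c)).2‖ ^ 2 := by
        rw [hb, norm_mul, mul_pow, Complex.norm_real, Real.norm_eq_abs,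
          abs_of_nonneg (Real.sqrt_nonneg _), Real.sq_sqrt (div_nonneg h1 h2.le)]
      rw [hgM]
      simp only [fE, gE, hlam]
      have h2' : (1:ℝ) - z' s₀ ≠ 0 := ne_of_gt h2
      field_simp
      ring
    rw [← hval]
    refine HasDerivAt.congr_of_eventuallyEq hG ?_
    filter_upwards [Metric.ball_mem_nhds s₀ one_pos] with s hs
    rw [Metric.mem_ball, Real.dist_eq] at hs
    exact hEG s hs.le
  -- conclude: constant function
  intro s t
  have hdiff : Differentiable ℝ (fun s => ∫ x in Set.Ioi (z s), fE ψ (s, x)) :=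
    fun u => (key u).differentiableAt
  have hconst := is_const_of_deriv_eq_zero hdiff (fun u => (key u).deriv) s t
  simpa [fE] using hconst
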